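/- The one-rule TRS R = { f(x,x) → x }, in the presence of an additional AC symbol +, has no critical pairs with itself and no critical pairs with the AC axioms AC^±, yet R is not Church–Rosser modulo AC: x + y and f(x + y, y + x) are convertible modulo R ∪ AC but are distinct R-normal forms that are not AC-equivalent. -/
import Mathlib


/-- First-order terms over a signature `F` with natural-number variables. -/
inductive Tm (F : Type) : Type
  | var : Nat → Tm F
  | fn  : F → List (Tm F) → Tm F

namespace Tm

variable {F : Type}

mutual
def subst (σ : Nat → Tm F) : Tm F → Tm F
  | .var n => σ n
  | .fn f ts => .fn f (substList σ ts)
def substList (σ : Nat → Tm F) : List (Tm F) → List (Tm F)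
  | [] => []
  | t :: ts => subst σ t :: substList σ ts
end

mutual
def varsList : Tm F → List Nat
  | .var n => [n]
  | .fn _ ts => varsListL ts
def varsListL : List (Tm F) → List Nat
  | [] => []
  | t :: ts => varsList t ++ varsListL ts
end

/-- The set of variables of a term. -/
def vars (t : Tm F) : Set Nat := {n | n ∈ varsList t}

/-- A term is linear if no variable occurs more than once. -/
def Linear (t : Tm F) : Prop := (varsList t).Nodup

/-- The subterm at a given position (if the position exists). -/
def subtermAt : Tm F → List Nat → Option (Tm F)
  | t, [] => some t
  | .var _, _ :: _ => none
  | .fn _ ts, i :: p =>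
    match ts[i]? with
    | some u => subtermAt u p
    | none => none
  termination_by t p => p.length

/-- Replacement of the subterm at a given position. -/
def replaceAt : Tm F → List Nat → Tm F → Option (Tm F)
  | _, [], s => some s
  | .var _, _ :: _, _ => none
  | .fn f ts, i :: p, s =>
    match ts[i]? with
    | some u => (replaceAt u p s).map fun u' => .fn f (ts.set i u')
    | none => none
  termination_by t p _ => p.length

end Tm

open Tm

/-- A term rewrite system (or equational system): a set of pairs of terms. -/
abbrev TRS (F : Type) := Set (Tm F × Tm F)

/-- Well-formedness of the rules: left-hand sides are not variables and
variables of right-hand sides occur on the left. -/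
def IsTRS {F : Type} (R : TRS F) : Prop :=
  ∀ p ∈ R, (∀ n, p.1 ≠ .var n) ∧ vars p.2 ⊆ vars p.1

def LeftLinear {F : Type} (R : TRS F) : Prop := ∀ p ∈ R, Linear p.1

/-- One-step rewrite relation of a set of rules (closed under contexts and
substitutions). -/
def Rew {F : Type} (R : TRS F) (s t : Tm F) : Prop :=
  ∃ p l r σ, (l, r) ∈ R ∧ subtermAt s p = some (subst σ l) ∧
    replaceAt s p (subst σ r) = some t

/-- Normal forms. -/
def NF {A : Type} (r : A → A → Prop) (a : A) : Prop := ∀ b, ¬ r a b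

/-- The equational theory `∼B` generated by an ES `B`. -/
def simE {F : Type} (B : TRS F) : Tm F → Tm F → Prop :=
  Relation.EqvGen (Rew B)

/-- Rewriting modulo: `∼B · →R · ∼B`. -/
def RewMod {F : Type} (R B : TRS F) (s t : Tm F) : Prop :=
  ∃ s' t', simE B s s' ∧ Rew R s' t' ∧ simE B t' t

def Terminating {F : Type} (R : TRS F) : Prop :=
  WellFounded (fun a b => Rew R b a)

def TerminatingMod {F : Type} (R B : TRS F) : Prop :=
  WellFounded (fun a b => RewMod R B b a)

/-- Conversion modulo `B`: arbitrary sequences of `→R`, `←R` and `∼B` steps. -/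
def ConvMod {F : Type} (R B : TRS F) : Tm F → Tm F → Prop :=
  Relation.ReflTransGen (fun a b => Rew R a b ∨ Rew R b a ∨ simE B a b)

/-- Joinability modulo `B` using the plain rewrite relation:
`→R* · ∼B · ←R*`. -/
def JoinMod {F : Type} (R B : TRS F) (s t : Tm F) : Prop :=
  ∃ u v, Relation.ReflTransGen (Rew R) s u ∧ simE B u v ∧
    Relation.ReflTransGen (Rew R) t v

def ChurchRosserMod {F : Type} (R B : TRS F) : Prop :=
  ∀ s t, ConvMod R B s t → JoinMod R B s t

def Joinable {F : Type} (R : TRS F) (s t : Tm F) : Prop :=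
  ∃ v, Relation.ReflTransGen (Rew R) s v ∧ Relation.ReflTransGen (Rew R) t v

def Confluent {F : Type} (R : TRS F) : Prop :=
  ∀ s t u, Relation.ReflTransGen (Rew R) s t → Relation.ReflTransGen (Rew R) s u →
    Joinable R t u

/-- Renaming a term by a bijection on variables. -/
def rename {F : Type} (ρ : Nat ≃ Nat) (t : Tm F) : Tm F :=
  subst (fun n => .var (ρ n)) t

def VariantTm {F : Type} (s t : Tm F) : Prop := ∃ ρ : Nat ≃ Nat, rename ρ s = t

def VariantRule {F : Type} (p q : Tm F × Tm F) : Prop :=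
  ∃ ρ : Nat ≃ Nat, rename ρ p.1 = q.1 ∧ rename ρ p.2 = q.2

def Unifies {F : Type} (σ : Nat → Tm F) (s t : Tm F) : Prop := subst σ s = subst σ t

/-- Most general unifier. -/
def IsMGU {F : Type} (σ : Nat → Tm F) (s t : Tm F) : Prop :=
  Unifies σ s t ∧ ∀ τ, Unifies τ s t → ∃ δ, ∀ n, τ n = subst δ (σ n)

/-- `CriticalPeak R₁ R₂ t p s u` : `t ←R₁[p] s →R₂[ε] u` is a critical peak
obtained from an overlap of variable-disjoint variants of rules of `R₁`
(inner rule) and `R₂` (root rule). -/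
def CriticalPeak {F : Type} (R₁ R₂ : TRS F) (t : Tm F) (p : List Nat) (s u : Tm F) :
    Prop :=
  ∃ l₁ r₁ l₂ r₂ σ,
    (∃ q ∈ R₁, VariantRule q (l₁, r₁)) ∧
    (∃ q ∈ R₂, VariantRule q (l₂, r₂)) ∧
    (vars l₁ ∪ vars r₁) ∩ (vars l₂ ∪ vars r₂) = ∅ ∧
    (∃ f ts, subtermAt l₂ p = some (.fn f ts) ∧ IsMGU σ l₁ (.fn f ts)) ∧
    (p = [] → ¬ VariantRule (l₁, r₁) (l₂, r₂)) ∧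
    s = subst σ l₂ ∧
    replaceAt s p (subst σ r₁) = some t ∧
    u = subst σ r₂

/-- The set of critical pairs between `R₁` and `R₂`. -/
def CP {F : Type} (R₁ R₂ : TRS F) : Set (Tm F × Tm F) :=
  {tu | ∃ p s, CriticalPeak R₁ R₂ tu.1 p s tu.2}

/-- A critical peak `t ←[p] s →[ε] u` is prime (w.r.t. `R`) if all proper
subterms of `s|p` are in normal form w.r.t. `→R`. -/
def PrimeAt {F : Type} (R : TRS F) (s : Tm F) (p : List Nat) : Prop :=
  ∀ q v, q ≠ [] → subtermAt s (p ++ q) = some v → NF (Rew R) v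

/-- Prime critical pairs of a TRS. -/
def PCP {F : Type} (R : TRS F) : Set (Tm F × Tm F) :=
  {tu | ∃ p s, CriticalPeak R R tu.1 p s tu.2 ∧ PrimeAt R s p}

/-- `E ∪ E⁻¹`. -/
def sympm {F : Type} (E : TRS F) : TRS F :=
  E ∪ {q | ∃ p ∈ E, q = (p.2, p.1)}

/-- Prime critical pairs between `R` and `B^±` (in both directions), where
primality is always checked with respect to `→R`. -/
def PCPpm {F : Type} (R B : TRS F) : Set (Tm F × Tm F) :=
  {tu | ∃ p s, (CriticalPeak R (sympm B) tu.1 p s tu.2 ∨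
                CriticalPeak (sympm B) R tu.1 p s tu.2) ∧ PrimeAt R s p}

/-- The associativity and commutativity axioms for the symbols in `Ac`,
oriented left-to-right. -/
def ACax {F : Type} (Ac : Set F) : TRS F :=
  {q | ∃ f ∈ Ac,
    q = (Tm.fn f [Tm.fn f [Tm.var 0, Tm.var 1], Tm.var 2],
         Tm.fn f [Tm.var 0, Tm.fn f [Tm.var 1, Tm.var 2]]) ∨
    q = (Tm.fn f [Tm.var 0, Tm.var 1], Tm.fn f [Tm.var 1, Tm.var 0])}

/-- AC equivalence of terms. -/
def simAC {F : Type} (Ac : Set F) : Tm F → Tm F → Prop := simE (ACax Ac)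

/-- Peterson–Stickel rewriting: rewriting with AC matching at the redex. -/
def RewPS {F : Type} (Ac : Set F) (R : TRS F) (s t : Tm F) : Prop :=
  ∃ p l r σ w, (l, r) ∈ R ∧ subtermAt s p = some w ∧ simAC Ac w (subst σ l) ∧
    replaceAt s p (subst σ r) = some t

/-- The extended system `R^e`: `R` together with all extensions
`f(f(u,v),x) → f(r,x)` of rules `f(u,v) → r` with `f` an AC symbol
and `x` a fresh variable. -/
def ACExt {F : Type} (Ac : Set F) (R : TRS F) : TRS F :=
  R ∪ {q | ∃ f ∈ Ac, ∃ u v r x, (Tm.fn f [u, v], r) ∈ R ∧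
        x ∉ vars (Tm.fn f [u, v]) ∧ x ∉ vars r ∧
        q = (Tm.fn f [Tm.fn f [u, v], Tm.var x], Tm.fn f [r, Tm.var x])}

/-- Signature with a binary AC symbol `+` and a binary symbol `f`. -/
inductive Sig18 : Type
  | plus | f

/-- The AC axioms for `+`. -/
def AC18 : TRS Sig18 := ACax {Sig18.plus}

/-- The non-left-linear TRS `{f(x,x) → x}`. -/
def R18 : TRS Sig18 := {(Tm.fn Sig18.f [Tm.var 0, Tm.var 0], Tm.var 0)}

/-- The term `x + y`. -/
def t18l : Tm Sig18 := Tm.fn Sig18.plus [Tm.var 0, Tm.var 1]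

/-- The term `f(x + y, y + x)`. -/
def t18r : Tm Sig18 :=
  Tm.fn Sig18.f [Tm.fn Sig18.plus [Tm.var 0, Tm.var 1],
                 Tm.fn Sig18.plus [Tm.var 1, Tm.var 0]]

open Tm

section Helper18
open Sig18

inductive PlusOnly : Tm Sig18 → Prop
  | var (n) : PlusOnly (.var n)
  | fn {ts} : (∀ u ∈ ts, PlusOnly u) → PlusOnly (.fn .plus ts)

lemma plusOnly_subterm : ∀ (p : List Nat) (t : Tm Sig18), PlusOnly t →
    ∀ g ts, Tm.subtermAt t p = some (.fn g ts) → g = Sig18.plus := by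
  intro p
  induction p with
  | nil =>
    intro t ht g ts h
    simp [Tm.subtermAt] at h
    subst h; cases ht; rfl
  | cons i q ih =>
    intro t ht g ts h
    cases ht with
    | var n => simp [Tm.subtermAt] at h
    | @fn us hts =>
      cases hu : us[i]? with
      | none => simp [Tm.subtermAt, hu] at h
      | some u =>
        simp [Tm.subtermAt, hu] at h
        exact ih u (hts u (List.mem_of_getElem? hu)) g ts h

mutual
def ev : Tm Sig18 → Nat
  | .var _ => 0
  | .fn .plus ts => evL ts
  | .fn .f ts => evL ts + 1
def evL : List (Tm Sig18) → Nat
  | [] => 0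
  | t :: ts => ev t + evL ts
end

end Helper18

section Helper18b
open Sig18

lemma substList_eq_map (σ : Nat → Tm Sig18) : ∀ ts, substList σ ts = ts.map (subst σ) := by
  intro ts; induction ts with
  | nil => rfl
  | cons a ts ih => simp [substList, ih]

lemma plusOnly_subst {σ : Nat → Tm Sig18} (hσ : ∀ n, PlusOnly (σ n)) :
    ∀ {t : Tm Sig18}, PlusOnly t → PlusOnly (subst σ t) := by
  intro t ht
  induction ht with
  | var n => exact hσ n
  | @fn ts h ih =>
    show PlusOnly (.fn .plus (substList σ ts))
    rw [substList_eq_map]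
    exact PlusOnly.fn (by
      intro u hu
      obtain ⟨v, hv, rfl⟩ := List.mem_map.1 hu
      exact ih v hv)

lemma plusOnly_rename (ρ : Nat ≃ Nat) {t : Tm Sig18} (ht : PlusOnly t) :
    PlusOnly (rename ρ t) :=
  plusOnly_subst (fun n => PlusOnly.var (ρ n)) ht

lemma po2 {t1 t2 : Tm Sig18} (h1 : PlusOnly t1) (h2 : PlusOnly t2) :
    PlusOnly (.fn .plus [t1, t2]) := by
  apply PlusOnly.fn
  intro u hu
  simp at hu
  rcases hu with rfl | rfl
  exacts [h1, h2]

lemma evL_set : ∀ (ts : List (Tm Sig18)) (i : Nat) (u u' : Tm Sig18),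
    ts[i]? = some u → ev u = ev u' → evL (ts.set i u') = evL ts := by
  intro ts
  induction ts with
  | nil => intro i u u' h; simp at h
  | cons a ts ih =>
    intro i u u' h he
    cases i with
    | zero => simp at h; subst h; simp [evL, he]
    | succ j => simp at h; simp [evL, ih j u u' h he]

lemma ev_replace : ∀ (p : List Nat) (s w w' t : Tm Sig18),
    subtermAt s p = some w → replaceAt s p w' = some t → ev w = ev w' →
    ev s = ev t := by
  intro p
  induction p with
  | nil =>
    intro s w w' t h1 h2 he
    simp [subtermAt] at h1; simp [replaceAt] at h2
    subst h1; subst h2; exact he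
  | cons i q ih =>
    intro s w w' t h1 h2 he
    cases s with
    | var n => simp [subtermAt] at h1
    | fn g ts =>
      cases hu : ts[i]? with
      | none => simp [subtermAt, hu] at h1
      | some u =>
        simp [subtermAt, hu] at h1
        simp [replaceAt, hu] at h2
        obtain ⟨u', hu', rfl⟩ := h2
        have hee := ih u w w' u' h1 hu' he
        have hset := evL_set ts i u u' hu hee
        cases g <;> simp [ev, hset]

lemma ev_rewAC {s t : Tm Sig18} (h : Rew AC18 s t) : ev s = ev t := by
  obtain ⟨p, l, r, σ, hlr, h1, h2⟩ := h
  have key : ev (subst σ l) = ev (subst σ r) := by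
    obtain ⟨f, hf, hq⟩ := hlr
    rw [Set.mem_singleton_iff] at hf
    subst hf
    rcases hq with hq | hq <;> rw [Prod.ext_iff] at hq <;>
      obtain ⟨rfl, rfl⟩ := hq <;> simp [subst, substList, ev, evL] <;> omega
  exact ev_replace p s _ _ t h1 h2 key

lemma ev_simAC {s t : Tm Sig18} (h : simE AC18 s t) : ev s = ev t := by
  induction h with
  | rel a b hab => exact ev_rewAC hab
  | refl a => rfl
  | symm a b _ ih => exact ih.symm
  | trans a b c _ _ ih1 ih2 => exact ih1.trans ih2

lemma variantR18 {l r : Tm Sig18} (h : ∃ q ∈ R18, VariantRule q (l, r)) :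
    ∃ a : Nat, l = .fn .f [.var a, .var a] ∧ r = .var a := by
  obtain ⟨q, hq, ρ, h1, h2⟩ := h
  have h1 : rename ρ q.1 = l := h1
  have h2 : rename ρ q.2 = r := h2
  simp only [R18, Set.mem_singleton_iff] at hq
  subst hq
  refine ⟨ρ 0, ?_, ?_⟩
  · simpa [rename, subst, substList] using h1.symm
  · simpa [rename, subst] using h2.symm

lemma variantAC {l r : Tm Sig18} (h : ∃ q ∈ sympm AC18, VariantRule q (l, r)) :
    (∃ ts, l = .fn .plus ts) ∧ PlusOnly l := by
  obtain ⟨q, hq, ρ, h1, h2⟩ := h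
  have h1 : rename ρ q.1 = l := h1
  have h2 : rename ρ q.2 = r := h2
  have hcase : q.1 = .fn .plus [.fn .plus [.var 0, .var 1], .var 2] ∨
      q.1 = .fn .plus [.var 0, .fn .plus [.var 1, .var 2]] ∨
      q.1 = .fn .plus [.var 0, .var 1] ∨
      q.1 = .fn .plus [.var 1, .var 0] := by
    rcases hq with hq | hq
    · obtain ⟨g, hg, hq'⟩ := hq
      rw [Set.mem_singleton_iff] at hg
      subst hg
      rcases hq' with hq' | hq' <;> simp [hq']
    · obtain ⟨pp, hpq, rfl⟩ := hq
      obtain ⟨g, hg, hq'⟩ := hpq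
      rw [Set.mem_singleton_iff] at hg
      subst hg
      rcases hq' with hq' | hq' <;> simp [hq']
  have hpo : PlusOnly q.1 := by
    rcases hcase with h | h | h | h <;> rw [h] <;>
      exact po2 (by first | exact PlusOnly.var _ | exact po2 (PlusOnly.var _) (PlusOnly.var _))
                (by first | exact PlusOnly.var _ | exact po2 (PlusOnly.var _) (PlusOnly.var _))
  constructor
  · rcases hcase with h | h | h | h <;> rw [h] at h1 <;>
      exact ⟨_, by simpa [rename, subst] using h1.symm⟩
  · rw [← h1]; exact plusOnly_rename ρ hpo

end Helper18b

section Helper18c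
open Sig18

lemma nf_rtg {A : Type} {r : A → A → Prop} {a b : A} (hnf : NF r a)
    (h : Relation.ReflTransGen r a b) : a = b := by
  induction h with
  | refl => rfl
  | tail h1 h2 ih =>
    rw [← ih] at h2
    exact absurd h2 (hnf _)

lemma po_t18l : PlusOnly t18l := po2 (PlusOnly.var _) (PlusOnly.var _)

lemma nf_l18 : NF (Rew R18) t18l := by
  rintro b ⟨p, l, r, σ, hlr, h1, h2⟩
  simp only [R18, Set.mem_singleton_iff, Prod.ext_iff] at hlr
  obtain ⟨rfl, rfl⟩ := hlr
  have h1 : subtermAt t18l p = some (.fn .f [σ 0, σ 0]) := by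
    simpa [subst, substList] using h1
  have := plusOnly_subterm p t18l po_t18l _ _ h1
  cases this

lemma nf_r18 : NF (Rew R18) t18r := by
  rintro b ⟨p, l, r, σ, hlr, h1, h2⟩
  simp only [R18, Set.mem_singleton_iff, Prod.ext_iff] at hlr
  obtain ⟨rfl, rfl⟩ := hlr
  have h1 : subtermAt t18r p = some (.fn .f [σ 0, σ 0]) := by
    simpa [subst, substList] using h1
  match p with
  | [] =>
    simp [t18r, subtermAt] at h1
    obtain ⟨ha, hb⟩ := h1
    rw [← ha] at hb
    simp at hb
  | 0 :: q =>
    simp [t18r, subtermAt] at h1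
    have := plusOnly_subterm q _ (po2 (PlusOnly.var 0) (PlusOnly.var 1)) _ _ h1
    cases this
  | 1 :: q =>
    simp [t18r, subtermAt] at h1
    have := plusOnly_subterm q _ (po2 (PlusOnly.var 1) (PlusOnly.var 0)) _ _ h1
    cases this
  | (n+2) :: q => simp [t18r, subtermAt] at h1

def m18 : Tm Sig18 := .fn .f [t18l, t18l]

lemma step1_18 : Rew R18 m18 t18l := by
  refine ⟨[], .fn .f [.var 0, .var 0], .var 0, fun _ => t18l, rfl, ?_, ?_⟩
  · simp [m18, subtermAt, subst, substList]
  · simp [replaceAt, subst]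

lemma step2_18 : Rew AC18 m18 t18r := by
  refine ⟨[1], .fn .plus [.var 0, .var 1], .fn .plus [.var 1, .var 0], Tm.var,
    ⟨Sig18.plus, rfl, Or.inr rfl⟩, ?_, ?_⟩
  · simp [m18, t18l, subtermAt, subst, substList]
  · simp [m18, t18l, t18r, replaceAt, subst, substList]

lemma conv18 : ConvMod R18 AC18 t18l t18r :=
  Relation.ReflTransGen.tail (Relation.ReflTransGen.single (Or.inr (Or.inl step1_18)))
    (Or.inr (Or.inr (Relation.EqvGen.rel _ _ step2_18)))

lemma notsim18 : ¬ simE AC18 t18l t18r := by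
  intro h
  have := ev_simAC h
  simp [t18l, t18r, ev, evL] at this

lemma cp1_18 : CP R18 R18 = ∅ := by
  rw [Set.eq_empty_iff_forall_notMem]
  rintro ⟨t, u⟩ ⟨p, s, l₁, r₁, l₂, r₂, σ, hv1, hv2, hdisj, ⟨g, ts, hsub, hmgu⟩, hroot, _⟩
  obtain ⟨a, rfl, rfl⟩ := variantR18 hv1
  obtain ⟨b, rfl, rfl⟩ := variantR18 hv2
  match p with
  | [] =>
    refine hroot rfl ⟨Equiv.swap a b, ?_, ?_⟩
    · simp [rename, subst, substList, VariantRule]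
    · simp [rename, subst]
  | 0 :: q =>
    simp [subtermAt] at hsub
    cases q <;> simp [subtermAt] at hsub
  | 1 :: q =>
    simp [subtermAt] at hsub
    cases q <;> simp [subtermAt] at hsub
  | (n+2) :: q => simp [subtermAt] at hsub

lemma cp2_18 : CP R18 (sympm AC18) = ∅ := by
  rw [Set.eq_empty_iff_forall_notMem]
  rintro ⟨t, u⟩ ⟨p, s, l₁, r₁, l₂, r₂, σ, hv1, hv2, hdisj, ⟨g, ts, hsub, hmgu⟩, hroot, _⟩
  obtain ⟨a, rfl, rfl⟩ := variantR18 hv1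
  obtain ⟨_, hpo⟩ := variantAC hv2
  have hg := plusOnly_subterm p l₂ hpo g ts hsub
  subst hg
  have h := hmgu.1
  simp [Unifies, subst, substList] at h

lemma cp3_18 : CP (sympm AC18) R18 = ∅ := by
  rw [Set.eq_empty_iff_forall_notMem]
  rintro ⟨t, u⟩ ⟨p, s, l₁, r₁, l₂, r₂, σ, hv1, hv2, hdisj, ⟨g, ts, hsub, hmgu⟩, hroot, _⟩
  obtain ⟨⟨ts₁, rfl⟩, _⟩ := variantAC hv1
  obtain ⟨b, rfl, rfl⟩ := variantR18 hv2
  match p with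
  | [] =>
    simp [subtermAt] at hsub
    obtain ⟨rfl, rfl⟩ := hsub
    have h := hmgu.1
    simp [Unifies, subst, substList] at h
  | 0 :: q =>
    simp [subtermAt] at hsub
    cases q <;> simp [subtermAt] at hsub
  | 1 :: q =>
    simp [subtermAt] at hsub
    cases q <;> simp [subtermAt] at hsub
  | (n+2) :: q => simp [subtermAt] at hsub

end Helper18c

/-- `{f(x,x) → x}` has no critical pairs with itself nor with `AC^±`, yet is
not Church–Rosser modulo AC: `x + y` and `f(x + y, y + x)` are convertible
modulo `R ∪ AC` but are distinct `R`-normal forms that are not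
AC-equivalent. -/
theorem stmt18 :
    CP R18 R18 = ∅ ∧
    CP R18 (sympm AC18) = ∅ ∧
    CP (sympm AC18) R18 = ∅ ∧
    ConvMod R18 AC18 t18l t18r ∧
    t18l ≠ t18r ∧
    NF (Rew R18) t18l ∧
    NF (Rew R18) t18r ∧
    ¬ simE AC18 t18l t18r ∧
    ¬ ChurchRosserMod R18 AC18 := by
  refine ⟨cp1_18, cp2_18, cp3_18, conv18, ?_, nf_l18, nf_r18, notsim18, ?_⟩
  · intro h
    simp [t18l, t18r] at h
  · intro hcr
    obtain ⟨u, v, hu, huv, hv⟩ := hcr t18l t18r conv18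
    rw [← nf_rtg nf_l18 hu, ← nf_rtg nf_r18 hv] at huv
    exact notsim18 huv
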